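/- Let n ≥ 1, let a = (a₀,…,aₙ) be a tuple of integers with a_k ≥ 2, and define f : ℂ^{n+1} → ℂ by f(z) = z₀^{a₀} + ⋯ + zₙ^{aₙ} and ρ(z) = ∑ z_k·conj(z_k) = ‖z‖². Then: (1) every t ≠ 0 is a regular value of f, so V_a(t) = f⁻¹(t) is a smooth complex hypersurface; and (2) (0,1) is a regular value of the map (f, ρ) : ℂ^{n+1}∖{0} → ℂ × ℝ, so the Brieskorn manifold Σ_a = {z : f(z) = 0, ‖z‖ = 1} is a smooth real submanifold of ℂ^{n+1} of dimension 2n−1. -/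

import Mathlib

open Complex ContinuousLinearMap Finset

variable {n : ℕ}

noncomputable def projC (n : ℕ) (k : Fin (n+1)) : (Fin (n+1) → ℂ) →L[ℝ] ℂ :=
  ContinuousLinearMap.proj k

lemma hasFDerivAt_pow_proj (m : ℕ) (k : Fin (n+1)) (z : Fin (n+1) → ℂ) :
    HasFDerivAt (fun w : Fin (n+1) → ℂ => w k ^ m)
      (((m : ℂ) * z k ^ (m-1)) • projC n k) z := by
  have h1 : HasFDerivAt (fun x : ℂ => x ^ m)
      (((1 : ℂ →L[ℂ] ℂ).smulRight ((m : ℂ) * z k ^ (m-1))).restrictScalars ℝ) (z k) :=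
    ((hasDerivAt_pow m (z k)).hasFDerivAt).restrictScalars ℝ
  have h2 := h1.comp z (projC n k).hasFDerivAt
  have e : ((m : ℂ) * z k ^ (m-1)) • projC n k =
      (((1 : ℂ →L[ℂ] ℂ).smulRight ((m : ℂ) * z k ^ (m-1))).restrictScalars ℝ).comp (projC n k) := by
    ext u
    simp [projC, mul_comm]
  rw [e]; exact h2

noncomputable def nsqCLM (c : ℂ) : ℂ →L[ℝ] ℝ :=
  (2*c.re) • Complex.reCLM + (2*c.im) • Complex.imCLM

lemma nsqCLM_apply (c v : ℂ) : nsqCLM c v = 2*c.re*v.re + 2*c.im*v.im := by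
  simp [nsqCLM]

lemma hasFDerivAt_normSq' (c : ℂ) :
    HasFDerivAt Complex.normSq (nsqCLM c) c := by
  have h : HasFDerivAt (fun w : ℂ => (Complex.reCLM w) * (Complex.reCLM w)
      + (Complex.imCLM w) * (Complex.imCLM w))
      ((Complex.reCLM c • Complex.reCLM + Complex.reCLM c • Complex.reCLM) +
       (Complex.imCLM c • Complex.imCLM + Complex.imCLM c • Complex.imCLM)) c :=
    (Complex.reCLM.hasFDerivAt.mul Complex.reCLM.hasFDerivAt).add
      (Complex.imCLM.hasFDerivAt.mul Complex.imCLM.hasFDerivAt)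
  have e1 : (fun w : ℂ => (Complex.reCLM w) * (Complex.reCLM w)
      + (Complex.imCLM w) * (Complex.imCLM w)) = Complex.normSq := by
    ext w; simp [Complex.normSq_apply]
  have e2 : (Complex.reCLM c • Complex.reCLM + Complex.reCLM c • Complex.reCLM) +
      (Complex.imCLM c • Complex.imCLM + Complex.imCLM c • Complex.imCLM) = nsqCLM c := by
    ext u; simp [nsqCLM]; ring
  rw [e1, e2] at h; exact h

noncomputable def FD (a : Fin (n+1) → ℕ) (z : Fin (n+1) → ℂ) :
    (Fin (n+1) → ℂ) →L[ℝ] ℂ :=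
  ∑ k, ((a k : ℂ) * z k ^ (a k - 1)) • projC n k

noncomputable def RD (z : Fin (n+1) → ℂ) : (Fin (n+1) → ℂ) →L[ℝ] ℝ :=
  ∑ k, (nsqCLM (z k)).comp (projC n k)

lemma hasFDerivAt_f (a : Fin (n+1) → ℕ) (z : Fin (n+1) → ℂ) :
    HasFDerivAt (fun w : Fin (n+1) → ℂ => ∑ k, w k ^ a k) (FD a z) z :=
  HasFDerivAt.fun_sum fun k _ => hasFDerivAt_pow_proj (a k) k z

lemma hasFDerivAt_rho (z : Fin (n+1) → ℂ) :
    HasFDerivAt (fun w : Fin (n+1) → ℂ => ∑ k, Complex.normSq (w k)) (RD z) z :=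
  HasFDerivAt.fun_sum fun k _ => (hasFDerivAt_normSq' (z k)).comp z (projC n k).hasFDerivAt

lemma FD_single (a : Fin (n+1) → ℕ) (z : Fin (n+1) → ℂ) (j : Fin (n+1)) (v : ℂ) :
    FD a z (Pi.single j v) = (a j : ℂ) * z j ^ (a j - 1) * v := by
  simp only [FD, ContinuousLinearMap.sum_apply, ContinuousLinearMap.smul_apply]
  rw [Finset.sum_eq_single j]
  · simp [projC]
  · intro k _ hk; simp [projC, Pi.single_eq_of_ne hk]
  · simp

lemma RD_single (z : Fin (n+1) → ℂ) (j : Fin (n+1)) (v : ℂ) :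
    RD z (Pi.single j v) = 2*(z j).re*v.re + 2*(z j).im*v.im := by
  simp only [RD, ContinuousLinearMap.sum_apply, ContinuousLinearMap.comp_apply]
  rw [Finset.sum_eq_single j]
  · simp [projC, nsqCLM_apply]
  · intro k _ hk; simp [projC, Pi.single_eq_of_ne hk, nsqCLM_apply]
  · simp

theorem part1 (a : Fin (n + 1) → ℕ) (ha : ∀ k, 2 ≤ a k) :
    ∀ t : ℂ, t ≠ 0 → ∀ z : Fin (n + 1) → ℂ, (∑ k, z k ^ a k) = t →
      Function.Surjective (fderiv ℝ (fun w : Fin (n + 1) → ℂ => ∑ k, w k ^ a k) z) := by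
  intro t ht z hz
  obtain ⟨j, hj⟩ : ∃ j, z j ≠ 0 := by
    by_contra h; push_neg at h
    apply ht
    rw [← hz]
    exact Finset.sum_eq_zero fun k _ => by rw [h k]; exact zero_pow (by have := ha k; omega)
  rw [(hasFDerivAt_f a z).fderiv]
  intro c
  have hc : (a j : ℂ) * z j ^ (a j - 1) ≠ 0 :=
    mul_ne_zero (Nat.cast_ne_zero.mpr (by have := ha j; omega)) (pow_ne_zero _ hj)
  refine ⟨Pi.single j (c / ((a j : ℂ) * z j ^ (a j - 1))), ?_⟩
  rw [FD_single, mul_div_cancel₀ _ hc]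

theorem part2 (a : Fin (n + 1) → ℕ) (ha : ∀ k, 2 ≤ a k) :
    ∀ z : Fin (n + 1) → ℂ, z ≠ 0 → (∑ k, z k ^ a k) = 0 →
      (∑ k, Complex.normSq (z k)) = 1 →
      Function.Surjective (fderiv ℝ
        (fun w : Fin (n + 1) → ℂ => ((∑ k, w k ^ a k), ∑ k, Complex.normSq (w k))) z) := by
  intro z hz hf _hρ
  obtain ⟨j, hj⟩ : ∃ j, z j ≠ 0 := by
    by_contra h; push_neg at h; exact hz (funext h)
  have hG : HasFDerivAt
      (fun w : Fin (n + 1) → ℂ => ((∑ k, w k ^ a k), ∑ k, Complex.normSq (w k)))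
      ((FD a z).prod (RD z)) z := HasFDerivAt.prodMk (hasFDerivAt_f a z) (hasFDerivAt_rho z)
  rw [hG.fderiv]
  by_contra hsurj
  set G : (Fin (n+1) → ℂ) →L[ℝ] ℂ × ℝ := (FD a z).prod (RD z) with hGdef
  have hlt : LinearMap.range (G : (Fin (n+1) → ℂ) →ₗ[ℝ] ℂ × ℝ) < ⊤ := by
    rw [lt_top_iff_ne_top]
    intro h
    exact hsurj (LinearMap.range_eq_top.mp h)
  obtain ⟨φ, hφ0, hφ⟩ :=
    Submodule.exists_dual_map_eq_bot_of_lt_top hlt inferInstance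
  have key : ∀ u, φ (G u) = 0 := by
    intro u
    have hm : φ (G u) ∈ Submodule.map φ (LinearMap.range (G : (Fin (n+1) → ℂ) →ₗ[ℝ] ℂ × ℝ)) :=
      Submodule.mem_map_of_mem (LinearMap.mem_range_self _ u)
    rw [hφ] at hm
    exact hm
  set A := φ ((1:ℂ), (0:ℝ)) with hA
  set B := φ (Complex.I, (0:ℝ)) with hB
  set r := φ ((0:ℂ), (1:ℝ)) with hr
  have hrep : ∀ (c : ℂ) (s : ℝ), φ (c, s) = c.re*A + c.im*B + s*r := by
    intro c s
    have hdec : (c, s) = c.re • ((1:ℂ), (0:ℝ)) + c.im • (Complex.I, (0:ℝ))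
        + s • ((0:ℂ), (1:ℝ)) := by
      simp [Prod.ext_iff, Complex.ext_iff, Complex.real_smul]
    rw [hdec, map_add, map_add, map_smul, map_smul, map_smul]
    simp [smul_eq_mul]
    rfl
  -- the coefficients
  set c' : Fin (n+1) → ℂ := fun k => (a k : ℂ) * z k ^ (a k - 1) with hc'
  set μ : ℂ := ⟨A, B⟩ with hμ
  have keyk : ∀ k (v : ℂ),
      (c' k * v).re * A + (c' k * v).im * B + (2*(z k).re*v.re + 2*(z k).im*v.im) * r = 0 := by
    intro k v
    have := key (Pi.single k v)
    rw [hGdef] at this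
    simp only [ContinuousLinearMap.prod_apply] at this
    rw [FD_single, RD_single, hrep] at this
    exact this
  have hw : ∀ k, (starRingEnd ℂ) μ * c' k + 2*(r:ℂ)*(starRingEnd ℂ) (z k) = 0 := by
    intro k
    set w : ℂ := (starRingEnd ℂ) μ * c' k + 2*(r:ℂ)*(starRingEnd ℂ) (z k) with hwdef
    have h0 : ∀ v : ℂ, (w * v).re = 0 := by
      intro v
      have hk := keyk k v
      rw [hwdef]
      simp only [hc'] at hk ⊢
      simp only [hμ, Complex.add_re, Complex.mul_re, Complex.mul_im, Complex.conj_re,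
        Complex.conj_im, Complex.ofReal_re, Complex.ofReal_im, Complex.add_im,
        Complex.re_ofNat, Complex.im_ofNat] at hk ⊢
      linear_combination hk
    have h1 := h0 ((starRingEnd ℂ) w)
    rw [Complex.mul_conj] at h1
    exact Complex.normSq_eq_zero.mp (by exact_mod_cast h1)
  by_cases hr0 : r = 0
  · -- then μ ≠ 0 and all c' k = 0, so z = 0
    have hμ0 : μ ≠ 0 := by
      intro h
      apply hφ0
      have hA0 : A = 0 := congrArg Complex.re h
      have hB0 : B = 0 := congrArg Complex.im h
      apply LinearMap.ext
      rintro ⟨c, s⟩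
      rw [hrep, hA0, hB0, hr0]
      simp
    have := hw j
    rw [hr0] at this
    simp only [Complex.ofReal_zero, mul_zero, zero_mul, add_zero] at this
    rcases mul_eq_zero.mp this with h | h
    · exact hμ0 (by simpa using congrArg (starRingEnd ℂ) h)
    · rcases mul_eq_zero.mp h with h' | h'
      · have := ha j; simp at h'; omega
      · exact hj (pow_eq_zero_iff (by have := ha j; omega) |>.mp h')
  · -- r ≠ 0 case
    set lam : ℂ := -((starRingEnd ℂ) μ) / (2*(r:ℂ)) with hlam
    have h2r : (2:ℂ)*(r:ℂ) ≠ 0 := by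
      simp [hr0]
    have hconj : ∀ k, (starRingEnd ℂ) (z k) = lam * c' k := by
      intro k
      have h := hw k
      simp only [hc'] at h
      rw [hlam]
      rw [div_mul_eq_mul_div, eq_div_iff h2r]
      simp only [hc']
      linear_combination h
    have hsq : ∀ k, ((Complex.normSq (z k) : ℂ)) / (a k : ℂ) = lam * z k ^ a k := by
      intro k
      have hak : (a k : ℂ) ≠ 0 := Nat.cast_ne_zero.mpr (by have := ha k; omega)
      have hzz : z k * (starRingEnd ℂ) (z k) = (Complex.normSq (z k) : ℂ) :=
        Complex.mul_conj _
      have hpow : z k * z k ^ (a k - 1) = z k ^ a k := by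
        conv_rhs => rw [show a k = 1 + (a k - 1) by have := ha k; omega]
        rw [pow_add, pow_one]
      rw [div_eq_iff hak, ← hzz, hconj k]
      simp only [hc']
      linear_combination lam * ((a k : ℂ)) * hpow
    have hsum : (∑ k, (Complex.normSq (z k) : ℂ) / (a k : ℂ)) = 0 := by
      rw [Finset.sum_congr rfl fun k _ => hsq k, ← Finset.mul_sum, hf, mul_zero]
    have hre : (∑ k, Complex.normSq (z k) / (a k : ℝ)) = 0 := by
      have := congrArg Complex.re hsum
      simp only [Complex.re_sum, Complex.zero_re] at this
      rw [← this]
      refine Finset.sum_congr rfl fun k _ => ?_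
      rw [show (Complex.normSq (z k) : ℂ) / (a k : ℂ)
          = ((Complex.normSq (z k) / (a k : ℝ) : ℝ) : ℂ) by push_cast; ring]
      exact (Complex.ofReal_re _).symm
    have hterm : Complex.normSq (z j) / (a j : ℝ) = 0 := by
      have hnn : ∀ k ∈ Finset.univ, (0:ℝ) ≤ Complex.normSq (z k) / (a k : ℝ) :=
        fun k _ => div_nonneg (Complex.normSq_nonneg _) (by positivity)
      exact (Finset.sum_eq_zero_iff_of_nonneg hnn).mp hre j (Finset.mem_univ j)
    rcases div_eq_zero_iff.mp hterm with h | h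
    · exact hj (Complex.normSq_eq_zero.mp h)
    · have := ha j
      simp only [Nat.cast_eq_zero] at h
      omega



/-- For `f(z) = z₀^{a₀} + ⋯ + zₙ^{aₙ}` on `ℂ^{n+1}` with all `a_k ≥ 2`:
(1) every `t ≠ 0` is a regular value of `f` (the real differential is surjective on the
preimage), so `V_a(t)` is smooth; and
(2) `(0,1)` is a regular value of `(f, ‖·‖²)` away from the origin, so the Brieskorn
manifold `Σ_a = {f = 0, ‖z‖ = 1}` is a smooth submanifold of real dimension `2n-1`. -/
theorem stmt6 (n : ℕ) (hn : 1 ≤ n) (a : Fin (n + 1) → ℕ) (ha : ∀ k, 2 ≤ a k) :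
    (∀ t : ℂ, t ≠ 0 → ∀ z : Fin (n + 1) → ℂ, (∑ k, z k ^ a k) = t →
      Function.Surjective (fderiv ℝ (fun w : Fin (n + 1) → ℂ => ∑ k, w k ^ a k) z)) ∧
    (∀ z : Fin (n + 1) → ℂ, z ≠ 0 → (∑ k, z k ^ a k) = 0 →
      (∑ k, Complex.normSq (z k)) = 1 →
      Function.Surjective (fderiv ℝ
        (fun w : Fin (n + 1) → ℂ => ((∑ k, w k ^ a k), ∑ k, Complex.normSq (w k))) z)) :=
  ⟨part1 a ha, part2 a ha⟩
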